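/- arXiv:1701.01672 — 2 statements merged into one kernel-verified Lean document; each statement's English description precedes it below -/
import Mathlib

section
/- For every integer 1 ≤ t ≤ n, T*_t is contained in the set Ĥ_t := {(τ, s) : 0 ≤ s ≤ t−1, τ ∈ T*_s}, where for s = 0 the only element of T*_0 is the empty vector and (∅, 0) is interpreted as the empty vector. Equivalently: every nonempty τ = (τ_1,…,τ_k) ∈ T*_t has the property that its prefix (τ_1,…,τ_{k−1}) lies in T*_{τ_k}, and if the empty vector is in T*_t it trivially lies in Ĥ_t. -/
open Finset

/-- Segment cost `C(s,t,φ,ψ)`: cost of fitting data `y_{s+1:t}` with a linear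
function taking value `φ` at time `s` and value `ψ` at time `t`. -/
noncomputable def segCost (y : ℕ → ℝ) (σ : ℝ) (s t : ℕ) (φ ψ : ℝ) : ℝ :=
  (1 / σ ^ 2) * ∑ j ∈ Finset.Icc (s + 1) t,
    (y j - φ - ((ψ - φ) / ((t : ℝ) - (s : ℝ))) * ((j : ℝ) - (s : ℝ))) ^ 2

/-- `ValidCP t τ` : `τ` is a (possibly empty) strictly increasing vector of
changepoints `0 < τ₁ < ⋯ < τ_k < t`, i.e. an element of `T_t`. -/
def ValidCP (t : ℕ) (τ : List ℕ) : Prop :=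
  τ.Chain' (· < ·) ∧ ∀ x ∈ τ, 0 < x ∧ x < t

/-- Penalised cost of segmenting `y_{1:t}` with changepoints `τ = (τ₁,…,τ_k)`,
fitted values `φs 0, …, φs k` at times `0, τ₁, …, τ_k`, and fitted value `φ` at time `t`. -/
noncomputable def segTotal (y : ℕ → ℝ) (σ β : ℝ) (h : ℕ → ℝ) (t : ℕ)
    (τ : List ℕ) (φs : ℕ → ℝ) (φ : ℝ) : ℝ :=
  let p : ℕ → ℕ := fun i => (0 :: τ).getD i 0
  (∑ i ∈ Finset.range τ.length,
      (segCost y σ (p i) (p (i + 1)) (φs i) (φs (i + 1)) + h (p (i + 1) - p i)))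
    + segCost y σ (p τ.length) t (φs τ.length) φ + h (t - p τ.length)
    + β * ((τ.length : ℝ) + 1)

/-- `f_τ^t(φ)` : minimum penalised cost of segmenting `y_{1:t}` with changepoints `τ`
and fitted value `φ` at time `t`, minimised over the fitted values at the changepoints. -/
noncomputable def fseg (y : ℕ → ℝ) (σ β : ℝ) (h : ℕ → ℝ) (t : ℕ)
    (τ : List ℕ) (φ : ℝ) : ℝ :=
  ⨅ φs : ℕ → ℝ, segTotal y σ β h t τ φs φ

/-- `f^t(φ)` : minimum penalised cost of segmenting `y_{1:t}` with fitted value `φ`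
at time `t`, minimised over all changepoint vectors in `T_t`; `f^0 ≡ 0`. -/
noncomputable def fDP (y : ℕ → ℝ) (σ β : ℝ) (h : ℕ → ℝ) (t : ℕ) (φ : ℝ) : ℝ :=
  if t = 0 then 0 else ⨅ τ : {τ : List ℕ // ValidCP t τ}, fseg y σ β h t τ.1 φ

lemma segCost_nonneg (y : ℕ → ℝ) (σ : ℝ) (s t : ℕ) (φ ψ : ℝ) :
    0 ≤ segCost y σ s t φ ψ :=
  mul_nonneg (by positivity) (Finset.sum_nonneg fun j _ => sq_nonneg _)

lemma iInf_comp_surj {ι α : Type*} [Nonempty ι] (g : α → ℝ) (f : ι → α)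
    (hf : Function.Surjective f) : ⨅ i, g (f i) = ⨅ a, g a := by
  have : Set.range (fun i => g (f i)) = Set.range g := by
    rw [show (fun i => g (f i)) = g ∘ f from rfl, Set.range_comp, hf.range_eq, Set.image_univ]
  simp only [iInf, this]

lemma quad_lb {a b : ℝ} (ha : 0 ≤ a) (hab : a = 0 → b = 0) (c x : ℝ) :
    c - b ^ 2 / (4 * a) ≤ a * x ^ 2 + b * x + c := by
  rcases ha.eq_or_lt with h0 | h0
  · simp [← h0, hab h0.symm]
  · have h4 : (0:ℝ) < 4 * a := by linarith
    have hb : b ^ 2 / (4 * a) * (4 * a) = b ^ 2 := div_mul_cancel₀ _ (ne_of_gt h4)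
    nlinarith [sq_nonneg (2 * a * x + b)]

lemma quad_min_eq {a b : ℝ} (ha : 0 ≤ a) (hab : a = 0 → b = 0) (c : ℝ) :
    ∃ x₀ : ℝ, a * x₀ ^ 2 + b * x₀ + c = c - b ^ 2 / (4 * a) := by
  rcases ha.eq_or_lt with h0 | h0
  · exact ⟨0, by simp [← h0, hab h0.symm]⟩
  · refine ⟨-b / (2 * a), ?_⟩
    field_simp
    ring

lemma quad_ciInf {a b : ℝ} (ha : 0 ≤ a) (hab : a = 0 → b = 0) (c : ℝ) :
    ⨅ x : ℝ, (a * x ^ 2 + b * x + c) = c - b ^ 2 / (4 * a) := by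
  obtain ⟨x₀, hx₀⟩ := quad_min_eq ha hab c
  refine le_antisymm ?_ (le_ciInf fun x => quad_lb ha hab c x)
  calc ⨅ x : ℝ, (a * x ^ 2 + b * x + c) ≤ a * x₀ ^ 2 + b * x₀ + c :=
        ciInf_le ⟨c - b ^ 2 / (4 * a), by rintro _ ⟨x, rfl⟩; exact quad_lb ha hab c x⟩ x₀
    _ = _ := hx₀

lemma quad_bddBelow_props {a b c m : ℝ} (hm : ∀ x, m ≤ a * x ^ 2 + b * x + c) :
    0 ≤ a ∧ (a = 0 → b = 0) := by
  have hcm : m ≤ c := by have := hm 0; linarith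
  constructor
  · by_contra ha
    push_neg at ha
    set x : ℝ := max 1 ((|b| + (c - m) + 1) / (-a)) with hx
    have hx1 : (1:ℝ) ≤ x := le_max_left _ _
    have hx0 : (0:ℝ) ≤ x := by linarith
    have hna : (0:ℝ) < -a := by linarith
    have hx2 : (|b| + (c - m) + 1) / (-a) ≤ x := le_max_right _ _
    have hx3 : |b| + (c - m) + 1 ≤ (-a) * x := by
      rw [div_le_iff₀ hna] at hx2; linarith [hx2]
    have hbx : b * x ≤ |b| * x := mul_le_mul_of_nonneg_right (le_abs_self b) hx0
    have key : a * x ^ 2 + b * x + c < m := by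
      have h5 : a * x + |b| ≤ -((c - m) + 1) := by nlinarith
      have hneg : a * x + |b| ≤ 0 := by linarith
      have h6 : (a * x + |b|) * x ≤ (a * x + |b|) * 1 := mul_le_mul_of_nonpos_left hx1 hneg
      nlinarith
    exact absurd (hm x) (not_le.mpr key)
  · intro ha
    by_contra hb
    have := hm ((m - 1 - c) / b)
    rw [ha] at this
    field_simp at this
    have hb2 : 0 < b ^ 2 := lt_of_le_of_ne (sq_nonneg b) (Ne.symm (pow_ne_zero 2 hb))
    rw [le_div_iff₀ hb2] at this
    nlinarith [this]

lemma segCost_quad (y : ℕ → ℝ) {σ : ℝ} (hσ : 0 < σ) (r s : ℕ) :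
    ∃ A B C D E F : ℝ, 0 ≤ A ∧ (A = 0 → B = 0 ∧ D = 0) ∧
      ∀ u ψ : ℝ, segCost y σ r s u ψ =
        A * u ^ 2 + B * (u * ψ) + C * ψ ^ 2 + D * u + E * ψ + F := by
  set d : ℝ := (s : ℝ) - (r : ℝ) with hd
  set c1 : ℕ → ℝ := fun j => 1 - ((j : ℝ) - (r : ℝ)) / d with hc1
  set c2 : ℕ → ℝ := fun j => ((j : ℝ) - (r : ℝ)) / d with hc2
  set J : Finset ℕ := Finset.Icc (r + 1) s with hJ
  refine ⟨(1 / σ ^ 2) * ∑ j ∈ J, (c1 j) ^ 2,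
    (1 / σ ^ 2) * ∑ j ∈ J, 2 * c1 j * c2 j,
    (1 / σ ^ 2) * ∑ j ∈ J, (c2 j) ^ 2,
    (1 / σ ^ 2) * ∑ j ∈ J, (-2 * y j * c1 j),
    (1 / σ ^ 2) * ∑ j ∈ J, (-2 * y j * c2 j),
    (1 / σ ^ 2) * ∑ j ∈ J, (y j) ^ 2, ?_, ?_, ?_⟩
  · exact mul_nonneg (by positivity) (Finset.sum_nonneg fun j _ => sq_nonneg _)
  · intro hA
    have hs : (1 / σ ^ 2 : ℝ) ≠ 0 := by positivity
    have hsum : ∑ j ∈ J, (c1 j) ^ 2 = 0 := by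
      rcases mul_eq_zero.mp hA with h | h
      · exact absurd h hs
      · exact h
    have hzero : ∀ j ∈ J, c1 j = 0 := by
      intro j hj
      have := (Finset.sum_eq_zero_iff_of_nonneg fun j _ => sq_nonneg (c1 j)).mp hsum j hj
      exact pow_eq_zero_iff (n := 2) (by norm_num) |>.mp this
    constructor
    · rw [mul_eq_zero]; right
      exact Finset.sum_eq_zero fun j hj => by rw [hzero j hj]; ring
    · rw [mul_eq_zero]; right
      exact Finset.sum_eq_zero fun j hj => by rw [hzero j hj]; ring
  · intro u ψ
    have hexp : ∀ j ∈ J,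
        (y j - u - ((ψ - u) / ((s : ℝ) - (r : ℝ))) * ((j : ℝ) - (r : ℝ))) ^ 2 =
        (c1 j) ^ 2 * u ^ 2 + (2 * c1 j * c2 j) * (u * ψ) + (c2 j) ^ 2 * ψ ^ 2
          + (-2 * y j * c1 j) * u + (-2 * y j * c2 j) * ψ + (y j) ^ 2 := by
      intro j _
      simp only [hc1, hc2, hd]
      ring
    unfold segCost
    rw [← hJ, Finset.sum_congr rfl hexp]
    simp only [Finset.sum_add_distrib, ← Finset.sum_mul]
    ring


def pfun (ρ : List ℕ) (i : ℕ) : ℕ := (0 :: ρ).getD i 0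

lemma segTotal_def (y : ℕ → ℝ) (σ β : ℝ) (h : ℕ → ℝ) (t : ℕ) (ρ : List ℕ)
    (φs : ℕ → ℝ) (φ : ℝ) :
    segTotal y σ β h t ρ φs φ =
      (∑ i ∈ Finset.range ρ.length,
        (segCost y σ (pfun ρ i) (pfun ρ (i + 1)) (φs i) (φs (i + 1))
          + h (pfun ρ (i + 1) - pfun ρ i)))
      + segCost y σ (pfun ρ ρ.length) t (φs ρ.length) φ + h (t - pfun ρ ρ.length)
      + β * ((ρ.length : ℝ) + 1) := rfl

lemma segTotal_congr (y : ℕ → ℝ) (σ β : ℝ) (h : ℕ → ℝ) (t : ℕ) (ρ : List ℕ)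
    {φs φs' : ℕ → ℝ} (φ : ℝ) (hp : ∀ i ≤ ρ.length, φs i = φs' i) :
    segTotal y σ β h t ρ φs φ = segTotal y σ β h t ρ φs' φ := by
  rw [segTotal_def, segTotal_def, hp ρ.length le_rfl]
  congr 3
  refine Finset.sum_congr rfl fun i hi => ?_
  have hi' := Finset.mem_range.mp hi
  rw [hp i (le_of_lt hi'), hp (i + 1) hi']

lemma pfun_dropLast (ρ : List ℕ) (i : ℕ) (hi : i ≤ ρ.length - 1) :
    pfun ρ.dropLast i = pfun ρ i := by
  unfold pfun
  rcases eq_or_ne i 0 with rfl | h0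
  · rfl
  · obtain ⟨j, rfl⟩ := Nat.exists_eq_succ_of_ne_zero h0
    show ρ.dropLast.getD j 0 = ρ.getD j 0
    rcases Nat.lt_or_ge j (ρ.length - 1) with hj | hj
    · rw [List.getD_eq_getElem _ _ (by simpa using hj),
        List.getD_eq_getElem _ _ (by omega), List.getElem_dropLast]
    · omega

lemma pfun_last (ρ : List ℕ) (hne : ρ ≠ []) : pfun ρ ρ.length = ρ.getLast hne := by
  unfold pfun
  have h0 : 0 < ρ.length := List.length_pos_iff_ne_nil.mpr hne
  obtain ⟨k, hk⟩ := Nat.exists_eq_succ_of_ne_zero h0.ne'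
  rw [hk]
  show ρ.getD k 0 = ρ.getLast hne
  rw [List.getD_eq_getElem _ _ (by omega), List.getLast_eq_getElem]
  congr 1
  omega

lemma segTotal_decomp (y : ℕ → ℝ) (σ β : ℝ) (h : ℕ → ℝ) (t : ℕ) {ρ : List ℕ}
    (hne : ρ ≠ []) (φs : ℕ → ℝ) (φ : ℝ) :
    segTotal y σ β h t ρ φs φ =
      segTotal y σ β h (ρ.getLast hne) ρ.dropLast φs (φs ρ.length)
        + (segCost y σ (ρ.getLast hne) t (φs ρ.length) φ
            + h (t - ρ.getLast hne) + β) := by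
  have h0 : 0 < ρ.length := List.length_pos_iff_ne_nil.mpr hne
  set K := ρ.length with hK
  have hKd : ρ.dropLast.length = K - 1 := by simp [hK]
  have hK1 : K - 1 + 1 = K := Nat.succ_pred_eq_of_pos h0
  rw [segTotal_def, segTotal_def, hKd]
  have hsum : ∑ i ∈ Finset.range K,
      (segCost y σ (pfun ρ i) (pfun ρ (i + 1)) (φs i) (φs (i + 1))
        + h (pfun ρ (i + 1) - pfun ρ i))
      = (∑ i ∈ Finset.range (K - 1),
          (segCost y σ (pfun ρ i) (pfun ρ (i + 1)) (φs i) (φs (i + 1))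
            + h (pfun ρ (i + 1) - pfun ρ i)))
        + (segCost y σ (pfun ρ (K - 1)) (pfun ρ K) (φs (K - 1)) (φs K)
            + h (pfun ρ K - pfun ρ (K - 1))) := by
    rw [← hK1, Finset.sum_range_succ, hK1]
  rw [hsum]
  have hplast : pfun ρ K = ρ.getLast hne := pfun_last ρ hne
  have hpd : ∀ i ≤ K - 1, pfun ρ.dropLast i = pfun ρ i := fun i hi => pfun_dropLast ρ i hi
  have hsum2 : ∑ i ∈ Finset.range (K - 1),
      (segCost y σ (pfun ρ.dropLast i) (pfun ρ.dropLast (i + 1)) (φs i) (φs (i + 1))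
        + h (pfun ρ.dropLast (i + 1) - pfun ρ.dropLast i))
      = ∑ i ∈ Finset.range (K - 1),
      (segCost y σ (pfun ρ i) (pfun ρ (i + 1)) (φs i) (φs (i + 1))
        + h (pfun ρ (i + 1) - pfun ρ i)) := by
    refine Finset.sum_congr rfl fun i hi => ?_
    have hi' := Finset.mem_range.mp hi
    rw [hpd i (by omega), hpd (i + 1) (by omega)]
  rw [hsum2, hpd (K - 1) le_rfl, hplast]
  have hcast : (K : ℝ) = ((K - 1 : ℕ) : ℝ) + 1 := by
    rw [Nat.cast_pred h0]; ring
  linear_combination β * hcast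

lemma segTotal_lb (y : ℕ → ℝ) (σ β : ℝ) (h : ℕ → ℝ) (t : ℕ) (ρ : List ℕ) :
    ∃ m : ℝ, ∀ (φs : ℕ → ℝ) (φ : ℝ), m ≤ segTotal y σ β h t ρ φs φ := by
  refine ⟨(∑ i ∈ Finset.range ρ.length, h (pfun ρ (i + 1) - pfun ρ i))
    + h (t - pfun ρ ρ.length) + β * ((ρ.length : ℝ) + 1), fun φs φ => ?_⟩
  rw [segTotal_def]
  have h1 : ∑ i ∈ Finset.range ρ.length, h (pfun ρ (i + 1) - pfun ρ i)
      ≤ ∑ i ∈ Finset.range ρ.length,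
        (segCost y σ (pfun ρ i) (pfun ρ (i + 1)) (φs i) (φs (i + 1))
          + h (pfun ρ (i + 1) - pfun ρ i)) := by
    refine Finset.sum_le_sum fun i _ => ?_
    have := segCost_nonneg y σ (pfun ρ i) (pfun ρ (i + 1)) (φs i) (φs (i + 1))
    linarith
  have h2 := segCost_nonneg y σ (pfun ρ ρ.length) t (φs ρ.length) φ
  linarith

lemma fseg_lb (y : ℕ → ℝ) (σ β : ℝ) (h : ℕ → ℝ) (t : ℕ) (ρ : List ℕ) :
    ∃ m : ℝ, ∀ φ : ℝ, m ≤ fseg y σ β h t ρ φ := by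
  obtain ⟨m, hm⟩ := segTotal_lb y σ β h t ρ
  exact ⟨m, fun φ => le_ciInf fun φs => hm φs φ⟩

lemma segTotal_bddBelow (y : ℕ → ℝ) (σ β : ℝ) (h : ℕ → ℝ) (t : ℕ) (ρ : List ℕ)
    (φ : ℝ) : BddBelow (Set.range fun φs : ℕ → ℝ => segTotal y σ β h t ρ φs φ) := by
  obtain ⟨m, hm⟩ := segTotal_lb y σ β h t ρ
  exact ⟨m, by rintro _ ⟨φs, rfl⟩; exact hm φs φ⟩

lemma fseg_le_segTotal (y : ℕ → ℝ) (σ β : ℝ) (h : ℕ → ℝ) (t : ℕ) (ρ : List ℕ)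
    (φs : ℕ → ℝ) (φ : ℝ) : fseg y σ β h t ρ φ ≤ segTotal y σ β h t ρ φs φ :=
  ciInf_le (segTotal_bddBelow y σ β h t ρ φ) φs

lemma package {g : ℝ → ℝ} {lead Bq bq Cq Eq cq m : ℝ} (hlead : 0 ≤ lead)
    (hz : lead = 0 → Bq = 0 ∧ bq = 0)
    (hg : ∀ ψ, g ψ = (Cq * ψ ^ 2 + Eq * ψ + cq) - (Bq * ψ + bq) ^ 2 / (4 * lead))
    (hm : ∀ ψ, m ≤ g ψ) :
    ∃ a' b' c' : ℝ, 0 ≤ a' ∧ (a' = 0 → b' = 0) ∧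
      ∀ ψ, g ψ = a' * ψ ^ 2 + b' * ψ + c' := by
  rcases hlead.eq_or_lt with h0 | h0
  · obtain ⟨hB, hb⟩ := hz h0.symm
    have hform : ∀ ψ, g ψ = Cq * ψ ^ 2 + Eq * ψ + cq := by
      intro ψ; rw [hg ψ, hB, hb]; simp
    have hprops := quad_bddBelow_props (fun ψ => (hform ψ) ▸ hm ψ)
    exact ⟨Cq, Eq, cq, hprops.1, hprops.2, hform⟩
  · have h4 : (4 * lead : ℝ) ≠ 0 := by positivity
    have hform : ∀ ψ, g ψ = (Cq - Bq ^ 2 / (4 * lead)) * ψ ^ 2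
        + (Eq - 2 * Bq * bq / (4 * lead)) * ψ + (cq - bq ^ 2 / (4 * lead)) := by
      intro ψ; rw [hg ψ]; field_simp; ring
    have hprops := quad_bddBelow_props (fun ψ => (hform ψ) ▸ hm ψ)
    exact ⟨_, _, _, hprops.1, hprops.2, hform⟩

lemma fseg_quad (y : ℕ → ℝ) {σ : ℝ} (hσ : 0 < σ) (β : ℝ) (h : ℕ → ℝ)
    (ρ : List ℕ) :
    ∀ s : ℕ, ∃ a b c : ℝ, 0 ≤ a ∧ (a = 0 → b = 0) ∧
      (∀ ψ, fseg y σ β h s ρ ψ = a * ψ ^ 2 + b * ψ + c) ∧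
      (∀ ψ, ∃ φs : ℕ → ℝ, segTotal y σ β h s ρ φs ψ = fseg y σ β h s ρ ψ) := by
  induction ρ using List.reverseRecOn with
  | nil =>
    intro s
    obtain ⟨A, B, C, D, E, F, hA, hABD, hquad⟩ := segCost_quad y hσ 0 s
    have hform : ∀ (φs : ℕ → ℝ) (ψ : ℝ), segTotal y σ β h s [] φs ψ
        = segCost y σ 0 s (φs 0) ψ + (h s + β) := by
      intro φs ψ
      rw [segTotal_def]
      simp [pfun]
      ring
    have hz : A = 0 → ∀ ψ : ℝ, B * ψ + D = 0 := by
      intro h0 ψ; obtain ⟨hB, hD⟩ := hABD h0; rw [hB, hD]; simp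
    have key : ∀ ψ : ℝ, fseg y σ β h s [] ψ
        = (C * ψ ^ 2 + E * ψ + (F + h s + β)) - (B * ψ + D) ^ 2 / (4 * A) ∧
        ∃ φs : ℕ → ℝ, segTotal y σ β h s [] φs ψ = fseg y σ β h s [] ψ := by
      intro ψ
      have hGu : ∀ u : ℝ, segCost y σ 0 s u ψ + (h s + β)
          = A * u ^ 2 + (B * ψ + D) * u + (C * ψ ^ 2 + E * ψ + (F + h s + β)) := by
        intro u; rw [hquad]; ring
      have h1 : fseg y σ β h s [] ψ
          = ⨅ u : ℝ, (A * u ^ 2 + (B * ψ + D) * u + (C * ψ ^ 2 + E * ψ + (F + h s + β))) := by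
        unfold fseg
        rw [show (fun φs : ℕ → ℝ => segTotal y σ β h s [] φs ψ)
            = fun φs : ℕ → ℝ => (A * (φs 0) ^ 2 + (B * ψ + D) * (φs 0)
              + (C * ψ ^ 2 + E * ψ + (F + h s + β))) from
          funext fun φs => by rw [hform, hGu]]
        exact iInf_comp_surj
          (fun u : ℝ => A * u ^ 2 + (B * ψ + D) * u + (C * ψ ^ 2 + E * ψ + (F + h s + β)))
          (fun φs : ℕ → ℝ => φs 0) (fun u => ⟨fun _ => u, rfl⟩)
      have h2 := quad_ciInf hA (fun h0 => hz h0 ψ) (C * ψ ^ 2 + E * ψ + (F + h s + β))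
      refine ⟨by rw [h1, h2], ?_⟩
      obtain ⟨u₀, hu₀⟩ := quad_min_eq hA (fun h0 => hz h0 ψ)
        (C * ψ ^ 2 + E * ψ + (F + h s + β))
      exact ⟨fun _ => u₀, by rw [hform, hGu, hu₀, h1, h2]⟩
    obtain ⟨m, hm⟩ := fseg_lb y σ β h s []
    obtain ⟨a', b', c', h1', h2', h3'⟩ := package hA
      (fun h0 => ⟨(hABD h0).1, (hABD h0).2⟩) (fun ψ => (key ψ).1) hm
    exact ⟨a', b', c', h1', h2', h3', fun ψ => (key ψ).2⟩
  | append_singleton ρ' r ih =>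
    intro s
    obtain ⟨a, b, c, ha, hab, hval, hatt⟩ := ih r
    obtain ⟨A, B, C, D, E, F, hA, hABD, hquad⟩ := segCost_quad y hσ r s
    have hne : ρ' ++ [r] ≠ [] := by simp
    have hlast : (ρ' ++ [r]).getLast hne = r := by simp [List.getLast_append]
    have hdl : (ρ' ++ [r]).dropLast = ρ' := by simp
    have hlen : (ρ' ++ [r]).length = ρ'.length + 1 := by simp
    set K' := ρ'.length with hK'
    have hdec : ∀ (φs : ℕ → ℝ) (ψ : ℝ), segTotal y σ β h s (ρ' ++ [r]) φs ψ
        = segTotal y σ β h r ρ' φs (φs (K' + 1))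
          + (segCost y σ r s (φs (K' + 1)) ψ + h (s - r) + β) := by
      intro φs ψ
      have := segTotal_decomp y σ β h s hne φs ψ
      rwa [hlast, hdl, hlen] at this
    have hz : a + A = 0 → ∀ ψ : ℝ, B * ψ + (b + D) = 0 := by
      intro h0 ψ
      have ha0 : a = 0 := le_antisymm (by linarith) ha
      have hA0 : A = 0 := by linarith
      obtain ⟨hB, hD⟩ := hABD hA0
      rw [hB, hD, hab ha0]; simp
    have hlead : 0 ≤ a + A := add_nonneg ha hA
    have key : ∀ ψ : ℝ, fseg y σ β h s (ρ' ++ [r]) ψ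
        = (C * ψ ^ 2 + E * ψ + (c + F + h (s - r) + β))
            - (B * ψ + (b + D)) ^ 2 / (4 * (a + A)) ∧
        ∃ φs : ℕ → ℝ, segTotal y σ β h s (ρ' ++ [r]) φs ψ
          = fseg y σ β h s (ρ' ++ [r]) ψ := by
      intro ψ
      set V : ℝ := (C * ψ ^ 2 + E * ψ + (c + F + h (s - r) + β))
          - (B * ψ + (b + D)) ^ 2 / (4 * (a + A)) with hV
      have hGu : ∀ u : ℝ, fseg y σ β h r ρ' u + (segCost y σ r s u ψ + h (s - r) + β)
          = (a + A) * u ^ 2 + (B * ψ + (b + D)) * u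
            + (C * ψ ^ 2 + E * ψ + (c + F + h (s - r) + β)) := by
        intro u; rw [hval u, hquad]; ring
      have hVle : ∀ u : ℝ, V ≤ (a + A) * u ^ 2 + (B * ψ + (b + D)) * u
          + (C * ψ ^ 2 + E * ψ + (c + F + h (s - r) + β)) :=
        fun u => quad_lb hlead (fun h0 => hz h0 ψ) _ u
      -- lower bound : V ≤ fseg
      have hlow : V ≤ fseg y σ β h s (ρ' ++ [r]) ψ := by
        refine le_ciInf fun φs => ?_
        rw [hdec φs ψ]
        have h1 : fseg y σ β h r ρ' (φs (K' + 1))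
            ≤ segTotal y σ β h r ρ' φs (φs (K' + 1)) :=
          fseg_le_segTotal y σ β h r ρ' φs (φs (K' + 1))
        have h2 := hVle (φs (K' + 1))
        rw [← hGu (φs (K' + 1))] at h2
        linarith
      -- attaining vector
      obtain ⟨u₀, hu₀⟩ := quad_min_eq hlead (fun h0 => hz h0 ψ)
        (C * ψ ^ 2 + E * ψ + (c + F + h (s - r) + β))
      obtain ⟨χ, hχ⟩ := hatt u₀
      set φs₀ : ℕ → ℝ := Function.update χ (K' + 1) u₀ with hφs₀
      have hupd : ∀ i ≤ ρ'.length, φs₀ i = χ i := by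
        intro i hi
        exact Function.update_of_ne (by omega) _ _
      have he2 : φs₀ (K' + 1) = u₀ := Function.update_self _ _ _
      have htot : segTotal y σ β h s (ρ' ++ [r]) φs₀ ψ = V := by
        rw [hdec φs₀ ψ, he2,
          segTotal_congr y σ β h r ρ' u₀ hupd, hχ, hGu u₀, hu₀]
      have hup : fseg y σ β h s (ρ' ++ [r]) ψ ≤ V := by
        rw [← htot]; exact fseg_le_segTotal y σ β h s (ρ' ++ [r]) φs₀ ψ
      have heq : fseg y σ β h s (ρ' ++ [r]) ψ = V := le_antisymm hup hlow
      exact ⟨heq, φs₀, by rw [htot, heq]⟩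
    obtain ⟨m, hm⟩ := fseg_lb y σ β h s (ρ' ++ [r])
    obtain ⟨a', b', c', h1', h2', h3'⟩ := package hlead
      (fun h0 => ⟨((hABD (by have : a = 0 := le_antisymm (by linarith) ha; linarith)).1),
        by have ha0 : a = 0 := le_antisymm (by linarith) ha
           have hA0 : A = 0 := by linarith
           rw [hab ha0, (hABD hA0).2]; ring⟩)
      (fun ψ => (key ψ).1) hm
    exact ⟨a', b', c', h1', h2', h3', fun ψ => (key ψ).2⟩

lemma valid_dropLast {t : ℕ} {ρ : List ℕ} (hτ : ValidCP t ρ) (hne : ρ ≠ []) :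
    ValidCP (ρ.getLast hne) ρ.dropLast := by
  have pw : ρ.Pairwise (· < ·) := List.isChain_iff_pairwise.mp hτ.1
  have pw2 : ρ.dropLast.Pairwise (· < ·) := List.Pairwise.sublist (ρ.dropLast_sublist) pw
  refine ⟨List.isChain_iff_pairwise.mpr pw2, fun x hx => ?_⟩
  constructor
  · exact (hτ.2 x (ρ.dropLast_subset hx)).1
  · have := List.dropLast_append_getLast hne
    rw [← this] at pw
    exact (List.pairwise_append.mp pw).2.2 x hx _ (by simp)

lemma valid_append {s t : ℕ} {ρ : List ℕ} (hρ : ValidCP s ρ) (hs : 0 < s)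
    (hst : s < t) : ValidCP t (ρ ++ [s]) := by
  have pw : ρ.Pairwise (· < ·) := List.isChain_iff_pairwise.mp hρ.1
  refine ⟨List.isChain_iff_pairwise.mpr (List.pairwise_append.mpr
    ⟨pw, List.pairwise_singleton _ _, fun a ha b hb => ?_⟩), fun x hx => ?_⟩
  · have : b = s := by simpa using hb
    subst this
    exact (hρ.2 a ha).2
  · rcases List.mem_append.mp hx with hx | hx
    · exact ⟨(hρ.2 x hx).1, lt_trans (hρ.2 x hx).2 hst⟩
    · have : x = s := by simpa using hx
      subst this
      exact ⟨hs, hst⟩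

lemma pfun_mono {s : ℕ} {ρ : List ℕ} (hρ : ValidCP s ρ) :
    (∀ i < ρ.length, pfun ρ i < pfun ρ (i + 1)) ∧ (0 < s → ∀ i ≤ ρ.length, pfun ρ i < s) := by
  have hget : ∀ j (hj : j < ρ.length), pfun ρ (j + 1) = ρ[j] := by
    intro j hj
    unfold pfun
    show ρ.getD j 0 = ρ[j]
    exact List.getD_eq_getElem ρ 0 hj
  have hmem : ∀ j (hj : j < ρ.length), 0 < ρ[j] ∧ ρ[j] < s :=
    fun j hj => hρ.2 _ (List.getElem_mem hj)
  constructor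
  · intro i hi
    match i with
    | 0 =>
      rw [hget 0 hi]
      exact (hmem 0 hi).1
    | j + 1 =>
      have hj1 : j < ρ.length := by omega
      rw [hget j hj1, hget (j + 1) hi]
      have := List.isChain_iff_getElem.mp hρ.1 j (by omega)
      simpa using this
  · intro hs i hi
    match i with
    | 0 => exact hs
    | j + 1 =>
      have hj : j < ρ.length := by omega
      rw [hget j hj]
      exact (hmem j hj).2

lemma length_le_of_valid {s : ℕ} {ρ : List ℕ} (hρ : ValidCP s ρ) : ρ.length ≤ s := by
  have pw : ρ.Pairwise (· < ·) := List.isChain_iff_pairwise.mp hρ.1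
  have hnd : ρ.Nodup := pw.nodup
  have hsub : ρ.toFinset ⊆ Finset.Ioo 0 s := by
    intro x hx
    rw [List.mem_toFinset] at hx
    exact Finset.mem_Ioo.mpr (hρ.2 x hx)
  have := Finset.card_le_card hsub
  rw [List.toFinset_card_of_nodup hnd, Nat.card_Ioo] at this
  omega

lemma segTotal_lb_uniform (y : ℕ → ℝ) (σ β : ℝ) (h : ℕ → ℝ) (hβ : 0 < β)
    {s : ℕ} (hs : 0 < s) :
    ∃ m : ℝ, ∀ ρ : List ℕ, ValidCP s ρ → ∀ (φs : ℕ → ℝ) (ψ : ℝ),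
      m ≤ segTotal y σ β h s ρ φs ψ := by
  have hnem : (Finset.Icc 1 s).Nonempty := ⟨1, by simp [Finset.mem_Icc]; omega⟩
  set m0 : ℝ := (Finset.Icc 1 s).inf' hnem h with hm0
  set m1 : ℝ := min m0 0 with hm1
  have hm1le : ∀ g ∈ Finset.Icc 1 s, m1 ≤ h g :=
    fun g hg => le_trans (min_le_left _ _) (Finset.inf'_le h hg)
  have hm10 : m1 ≤ 0 := min_le_right _ _
  refine ⟨((s : ℝ) + 1) * m1, fun ρ hρ φs ψ => ?_⟩
  obtain ⟨hmono, hlt⟩ := pfun_mono hρ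
  have hlt' := hlt hs
  set K := ρ.length with hK
  have hgap : ∀ i < K, pfun ρ (i + 1) - pfun ρ i ∈ Finset.Icc 1 s := by
    intro i hi
    have h1 := hmono i hi
    have h2 := hlt' (i + 1) hi
    rw [Finset.mem_Icc]
    omega
  have hgapl : s - pfun ρ K ∈ Finset.Icc 1 s := by
    have := hlt' K le_rfl
    rw [Finset.mem_Icc]
    omega
  rw [segTotal_def]
  have hsum : (K : ℝ) * m1 ≤ ∑ i ∈ Finset.range K,
      (segCost y σ (pfun ρ i) (pfun ρ (i + 1)) (φs i) (φs (i + 1))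
        + h (pfun ρ (i + 1) - pfun ρ i)) := by
    have h1 : (Finset.range K).card • m1 ≤ ∑ i ∈ Finset.range K,
        (segCost y σ (pfun ρ i) (pfun ρ (i + 1)) (φs i) (φs (i + 1))
          + h (pfun ρ (i + 1) - pfun ρ i)) := by
      refine Finset.card_nsmul_le_sum _ _ _ fun i hi => ?_
      have hi' := Finset.mem_range.mp hi
      have := hm1le _ (hgap i hi')
      have := segCost_nonneg y σ (pfun ρ i) (pfun ρ (i + 1)) (φs i) (φs (i + 1))
      linarith
    rwa [Finset.card_range, nsmul_eq_mul] at h1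
  have hterm : m1 ≤ h (s - pfun ρ K) := hm1le _ hgapl
  have hcost := segCost_nonneg y σ (pfun ρ K) s (φs K) ψ
  have hKs : (K : ℝ) ≤ (s : ℝ) := by
    exact_mod_cast length_le_of_valid hρ
  have hβK : 0 ≤ β * ((K : ℝ) + 1) := by positivity
  have hfin : ((s : ℝ) + 1) * m1 ≤ ((K : ℝ) + 1) * m1 :=
    mul_le_mul_of_nonpos_right (by linarith) hm10
  linarith

set_option maxHeartbeats 1000000 in
lemma fDP_le_fseg (y : ℕ → ℝ) (σ β : ℝ) (h : ℕ → ℝ) (hβ : 0 < β)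
    {t : ℕ} (ht : 0 < t) {ρ : List ℕ} (hρ : ValidCP t ρ) (φ : ℝ) :
    fDP y σ β h t φ ≤ fseg y σ β h t ρ φ := by
  unfold fDP
  rw [if_neg ht.ne']
  obtain ⟨m, hm⟩ := segTotal_lb_uniform y σ β h hβ ht
  have hbdd : BddBelow (Set.range fun τ : {τ : List ℕ // ValidCP t τ} =>
      fseg y σ β h t τ.1 φ) := by
    refine ⟨m, ?_⟩
    rintro _ ⟨⟨ρ', hρ'⟩, rfl⟩
    exact le_ciInf fun φs => hm ρ' hρ' φs φ
  exact ciInf_le hbdd ⟨ρ, hρ⟩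

/-- every nonempty functionally optimal changepoint vector
`τ = (τ₁,…,τ_k) ∈ T*_t` has its prefix `(τ₁,…,τ_{k-1})` functionally optimal at
time `τ_k`; equivalently `T*_t ⊆ Ĥ_t = {(τ,s) : 0 ≤ s ≤ t-1, τ ∈ T*_s}`. -/
theorem statement1 (n : ℕ) (hn : 1 ≤ n) (y : ℕ → ℝ) (σ : ℝ) (hσ : 0 < σ)
    (β : ℝ) (hβ : 0 < β) (h : ℕ → ℝ)
    (t : ℕ) (ht1 : 1 ≤ t) (htn : t ≤ n)
    (τ : List ℕ) (hτ : ValidCP t τ) (hne : τ ≠ [])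
    (hopt : ∃ φ : ℝ, fDP y σ β h t φ = fseg y σ β h t τ φ) :
    ∃ φ : ℝ, fDP y σ β h (τ.getLast hne) φ
      = fseg y σ β h (τ.getLast hne) τ.dropLast φ := by
  by_contra hcon
  push_neg at hcon
  obtain ⟨φ₀, hφ₀⟩ := hopt
  set s := τ.getLast hne with hs
  obtain ⟨hs0, hst⟩ := hτ.2 s (List.getLast_mem hne)
  have hτ' : ValidCP s τ.dropLast := valid_dropLast hτ hne
  -- attained minimiser for fseg t τ φ₀
  obtain ⟨a, b, c, -, -, -, hatt⟩ := fseg_quad y hσ β h τ t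
  obtain ⟨Φ, hΦ⟩ := hatt φ₀
  set ψ0 : ℝ := Φ τ.length with hψ0
  set Ecost : ℝ := segCost y σ s t ψ0 φ₀ + h (t - s) + β with hE
  have e1 : fseg y σ β h t τ φ₀
      = segTotal y σ β h s τ.dropLast Φ ψ0 + Ecost := by
    rw [← hΦ, segTotal_decomp y σ β h t hne Φ φ₀]
  have h2 : fseg y σ β h s τ.dropLast ψ0
      ≤ segTotal y σ β h s τ.dropLast Φ ψ0 :=
    fseg_le_segTotal y σ β h s τ.dropLast Φ ψ0
  have h3 : fDP y σ β h s ψ0 ≤ fseg y σ β h s τ.dropLast ψ0 :=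
    fDP_le_fseg y σ β h hβ hs0 hτ' ψ0
  have h4 : fDP y σ β h s ψ0 < fseg y σ β h s τ.dropLast ψ0 :=
    lt_of_le_of_ne h3 (hcon ψ0)
  have h5 : (⨅ σs : {l : List ℕ // ValidCP s l}, fseg y σ β h s σs.1 ψ0)
      < fseg y σ β h s τ.dropLast ψ0 := by
    rw [fDP, if_neg hs0.ne'] at h4
    exact h4
  have hnonempty : Nonempty {l : List ℕ // ValidCP s l} :=
    ⟨⟨[], List.isChain_nil, by simp⟩⟩
  obtain ⟨⟨ρ₀, hρ₀⟩, h6⟩ := exists_lt_of_ciInf_lt h5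
  -- build the competitor ρ₀ ++ [s]
  obtain ⟨a2, b2, c2, -, -, -, hatt₀⟩ := fseg_quad y hσ β h ρ₀ s
  obtain ⟨χ, hχ⟩ := hatt₀ ψ0
  have hval2 : ValidCP t (ρ₀ ++ [s]) := valid_append hρ₀ hs0 hst
  have hne2 : ρ₀ ++ [s] ≠ [] := by simp
  set χ' : ℕ → ℝ := Function.update χ (ρ₀.length + 1) ψ0 with hχ'
  have hupd : ∀ i ≤ ρ₀.length, χ' i = χ i := by
    intro i hi
    exact Function.update_of_ne (by omega) _ _
  have hlast2 : (ρ₀ ++ [s]).getLast hne2 = s := by simp [List.getLast_append]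
  have hdl2 : (ρ₀ ++ [s]).dropLast = ρ₀ := by simp
  have hlen2 : (ρ₀ ++ [s]).length = ρ₀.length + 1 := by simp
  have hdec2 := segTotal_decomp y σ β h t hne2 χ' φ₀
  rw [hlast2, hdl2, hlen2] at hdec2
  have hupd2 : χ' (ρ₀.length + 1) = ψ0 := Function.update_self _ _ _
  have e2 : segTotal y σ β h t (ρ₀ ++ [s]) χ' φ₀
      = fseg y σ β h s ρ₀ ψ0 + Ecost := by
    rw [hdec2, hupd2, segTotal_congr y σ β h s ρ₀ ψ0 hupd, hχ, hE]
  have h7 : fDP y σ β h t φ₀ ≤ fseg y σ β h t (ρ₀ ++ [s]) φ₀ :=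
    fDP_le_fseg y σ β h hβ (by omega) hval2 φ₀
  have h8 : fseg y σ β h t (ρ₀ ++ [s]) φ₀
      ≤ fseg y σ β h s ρ₀ ψ0 + Ecost := by
    rw [← e2]
    exact fseg_le_segTotal y σ β h t (ρ₀ ++ [s]) χ' φ₀
  linarith
end

section
/- Assume h : {1,…,n} → ℝ is nonnegative and nondecreasing. Let 1 ≤ t ≤ n−1 and let τ ∈ T_t. Then for every φ ∈ ℝ, f_τ^{t+1}(φ) ≥ (inf over φ' ∈ ℝ of f_τ^t(φ')) + (y_{t+1} − φ)²/σ², where τ is viewed as an element of T_{t+1}. -/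
open Finset

lemma p_lt (t : ℕ) (τ : List ℕ) (hτ : ValidCP t τ) (ht : 0 < t) :
    ∀ i ≤ τ.length, (0 :: τ).getD i 0 < t := by
  intro i hi
  match i with
  | 0 => simpa using ht
  | j + 1 =>
    have hj : j < τ.length := by omega
    have hlen : j + 1 < (0 :: τ).length := by simp; omega
    rw [List.getD_eq_getElem _ 0 hlen]
    have : (0 :: τ)[j + 1] = τ[j] := rfl
    rw [this]
    exact (hτ.2 _ (List.getElem_mem hj)).2

lemma p_strict (t : ℕ) (τ : List ℕ) (hτ : ValidCP t τ) :
    ∀ i < τ.length, (0 :: τ).getD i 0 < (0 :: τ).getD (i + 1) 0 := by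
  intro i hi
  have hchain : (0 :: τ).Chain' (· < ·) := by
    cases τ with
    | nil => exact List.isChain_singleton 0
    | cons a l =>
      show List.IsChain _ _
      rw [List.isChain_cons_cons]
      exact ⟨(hτ.2 a (by simp)).1, hτ.1⟩
  have h1 : i < (0 :: τ).length := by simp; omega
  have h2 : i + 1 < (0 :: τ).length := by simp; omega
  rw [List.getD_eq_getElem _ 0 h1, List.getD_eq_getElem _ 0 h2]
  exact List.isChain_iff_getElem.1 hchain i (by simpa using hi)

lemma segTotal_nonneg (y : ℕ → ℝ) (σ β : ℝ) (hβ : 0 < β) (h : ℕ → ℝ) (n t : ℕ)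
    (ht : 1 ≤ t) (htn : t ≤ n)
    (hpos : ∀ i, 1 ≤ i → i ≤ n → 0 ≤ h i)
    (τ : List ℕ) (hτ : ValidCP t τ) (φs : ℕ → ℝ) (φ : ℝ) :
    0 ≤ segTotal y σ β h t τ φs φ := by
  unfold segTotal
  have hsum : 0 ≤ ∑ i ∈ Finset.range τ.length,
      (segCost y σ ((0 :: τ).getD i 0) ((0 :: τ).getD (i+1) 0) (φs i) (φs (i + 1))
        + h ((0 :: τ).getD (i+1) 0 - (0 :: τ).getD i 0)) := by
    apply Finset.sum_nonneg
    intro i hi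
    rw [Finset.mem_range] at hi
    have h1 := p_strict t τ hτ i hi
    have h2 := p_lt t τ hτ (by omega) (i + 1) (by omega)
    have := hpos ((0 :: τ).getD (i+1) 0 - (0 :: τ).getD i 0) (by omega) (by omega)
    have := segCost_nonneg y σ ((0 :: τ).getD i 0) ((0 :: τ).getD (i+1) 0) (φs i) (φs (i + 1))
    linarith
  have hplt := p_lt t τ hτ (by omega) τ.length le_rfl
  have hh := hpos (t - (0 :: τ).getD τ.length 0) (by omega) (by omega)
  have hc := segCost_nonneg y σ ((0 :: τ).getD τ.length 0) t (φs τ.length) φ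
  have hb : 0 ≤ β * ((τ.length : ℝ) + 1) := by positivity
  simp only []
  linarith

lemma segCost_split (y : ℕ → ℝ) (σ : ℝ) (s t : ℕ) (hst : s < t) (a φ : ℝ) :
    segCost y σ s (t + 1) a φ =
      segCost y σ s t a (a + ((φ - a) / ((t : ℝ) + 1 - (s : ℝ))) * ((t : ℝ) - (s : ℝ)))
        + (y (t + 1) - φ) ^ 2 / σ ^ 2 := by
  have hst' : (s : ℝ) < t := by exact_mod_cast hst
  have hts : (t : ℝ) - s ≠ 0 := by linarith
  have ht1s : (t : ℝ) + 1 - s ≠ 0 := by linarith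
  unfold segCost
  rw [Finset.sum_Icc_succ_top (by omega)]
  push_cast
  have hcoef : (a + (φ - a) / ((t : ℝ) + 1 - s) * ((t : ℝ) - s) - a) / ((t : ℝ) - s)
      = (φ - a) / ((t : ℝ) + 1 - s) := by
    field_simp
    ring
  rw [hcoef]
  have hlast : y (t + 1) - a - (φ - a) / ((t : ℝ) + 1 - s) * ((t : ℝ) + 1 - s)
      = y (t + 1) - φ := by
    field_simp
    ring
  rw [hlast]
  ring

lemma validCP_mono {t t' : ℕ} (h : t ≤ t') {τ : List ℕ} (hτ : ValidCP t τ) : ValidCP t' τ :=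
  ⟨hτ.1, fun x hx => ⟨(hτ.2 x hx).1, lt_of_lt_of_le (hτ.2 x hx).2 h⟩⟩

/-- for nonnegative nondecreasing `h` and `τ ∈ T_t` with `t + 1 ≤ n`,
`f_τ^{t+1}(φ) ≥ (inf_{φ'} f_τ^t(φ')) + (y_{t+1} - φ)²/σ²`. -/
theorem statement12 (n : ℕ) (hn : 1 ≤ n) (y : ℕ → ℝ) (σ : ℝ) (hσ : 0 < σ)
    (β : ℝ) (hβ : 0 < β) (h : ℕ → ℝ)
    (hpos : ∀ i, 1 ≤ i → i ≤ n → 0 ≤ h i)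
    (hmono : ∀ i j, 1 ≤ i → i ≤ j → j ≤ n → h i ≤ h j)
    (t : ℕ) (ht1 : 1 ≤ t) (htn : t + 1 ≤ n)
    (τ : List ℕ) (hτ : ValidCP t τ) (φ : ℝ) :
    fseg y σ β h (t + 1) τ φ ≥
      (⨅ φ' : ℝ, fseg y σ β h t τ φ') + (y (t + 1) - φ) ^ 2 / σ ^ 2 := by
  have hnn : ∀ (φs : ℕ → ℝ) (ψ : ℝ), 0 ≤ segTotal y σ β h t τ φs ψ :=
    fun φs ψ => segTotal_nonneg y σ β hβ h n t ht1 (by omega) hpos τ hτ φs ψ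
  have hfnn : ∀ ψ : ℝ, 0 ≤ fseg y σ β h t τ ψ :=
    fun ψ => le_ciInf (fun φs => hnn φs ψ)
  rw [ge_iff_le, fseg]
  apply le_ciInf
  intro φs
  set s := (0 :: τ).getD τ.length 0 with hs
  have hslt : s < t := p_lt t τ hτ (by omega) τ.length le_rfl
  set a := φs τ.length with ha
  set ψ := a + ((φ - a) / ((t : ℝ) + 1 - (s : ℝ))) * ((t : ℝ) - (s : ℝ)) with hψ
  have key : segTotal y σ β h t τ φs ψ + (y (t + 1) - φ) ^ 2 / σ ^ 2
      ≤ segTotal y σ β h (t + 1) τ φs φ := by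
    unfold segTotal
    simp only []
    rw [segCost_split y σ s t hslt a φ]
    have hmono' : h (t - s) ≤ h (t + 1 - s) := hmono (t - s) (t + 1 - s) (by omega) (by omega) (by omega)
    linarith
  calc (⨅ φ' : ℝ, fseg y σ β h t τ φ') + (y (t + 1) - φ) ^ 2 / σ ^ 2
      ≤ fseg y σ β h t τ ψ + (y (t + 1) - φ) ^ 2 / σ ^ 2 := by
        gcongr
        exact ciInf_le ⟨0, fun x ⟨ψ', hψ'⟩ => hψ' ▸ hfnn ψ'⟩ ψ
    _ ≤ segTotal y σ β h t τ φs ψ + (y (t + 1) - φ) ^ 2 / σ ^ 2 := by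
        gcongr
        exact ciInf_le ⟨0, fun x ⟨φs', hφs'⟩ => hφs' ▸ hnn φs' ψ⟩ φs
    _ ≤ segTotal y σ β h (t + 1) τ φs φ := key
end
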